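/- arXiv:2102.07727 — 2 statements merged into one kernel-verified Lean document; each statement's English description precedes it below -/
import Mathlib

section
/- For vectors v, w ∈ ℂ^n under the actions of T = (ℂ^×)^d and its compact subtorus K = (S^1)^d given by the same weight matrix, O_{K,v} = O_{K,w} if and only if O_{T,v} = O_{T,w} and |v_j| = |w_j| for all j ∈ [n]. -/
open scoped BigOperators

noncomputable section

/-- Action of the torus `(ℂˣ)^d` on `ℂ^n` given by the integer weight matrix `M`:
coordinate `j` is scaled by the Laurent monomial `∏ i, (t i) ^ (M i j)`. -/
def torusAct {d n : ℕ} (M : Matrix (Fin d) (Fin n) ℤ) (t : Fin d → ℂˣ) (v : Fin n → ℂ) :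
    Fin n → ℂ := fun j => (∏ i, (t i : ℂ) ^ M i j) * v j

/-- The orbit of `v` under the torus action. -/
def torusOrbit {d n : ℕ} (M : Matrix (Fin d) (Fin n) ℤ) (v : Fin n → ℂ) : Set (Fin n → ℂ) :=
  {w | ∃ t : Fin d → ℂˣ, w = torusAct M t v}

/-- The Newton cone `C(v)`: the convex cone generated by the columns `m⁽ʲ⁾` of `M`
for `j` in the support of `v`. -/
def newtonCone {d n : ℕ} (M : Matrix (Fin d) (Fin n) ℤ) (v : Fin n → ℂ) : Set (Fin d → ℝ) :=
  {y | ∃ c : Fin n → ℝ, (∀ j, 0 ≤ c j) ∧ (∀ j, v j = 0 → c j = 0) ∧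
    y = ∑ j, c j • (fun i => (M i j : ℝ))}

/-- The lineality space `L(v) = C(v) ∩ (-C(v))` of the Newton cone. -/
def lineality {d n : ℕ} (M : Matrix (Fin d) (Fin n) ℤ) (v : Fin n → ℂ) : Set (Fin d → ℝ) :=
  newtonCone M v ∩ -newtonCone M v

/-- The essential support: indices `j` in the support of `v` whose weight column
lies in the lineality space of the Newton cone. -/
def esupp {d n : ℕ} (M : Matrix (Fin d) (Fin n) ℤ) (v : Fin n → ℂ) : Set (Fin n) :=
  {j | v j ≠ 0 ∧ (fun i => (M i j : ℝ)) ∈ lineality M v}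

/-- The orbit of `v` under the compact torus `K = (S¹)^d ⊆ T`, acting via the weight
matrix `M`. -/
def compactOrbit {d n : ℕ} (M : Matrix (Fin d) (Fin n) ℤ) (v : Fin n → ℂ) :
    Set (Fin n → ℂ) :=
  {w | ∃ t : Fin d → ℂˣ, (∀ i, ‖(t i : ℂ)‖ = 1) ∧ w = torusAct M t v}

lemma torusAct_mul {d n : ℕ} (M : Matrix (Fin d) (Fin n) ℤ) (t s : Fin d → ℂˣ) (v : Fin n → ℂ) :
    torusAct M t (torusAct M s v) = torusAct M (t * s) v := by
  funext j
  simp only [torusAct, Pi.mul_apply, Units.val_mul, mul_zpow, Finset.prod_mul_distrib]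
  ring

lemma torusAct_one {d n : ℕ} (M : Matrix (Fin d) (Fin n) ℤ) (v : Fin n → ℂ) :
    torusAct M 1 v = v := by
  funext j; simp [torusAct]

lemma torusAct_inv_cancel {d n : ℕ} (M : Matrix (Fin d) (Fin n) ℤ) (t : Fin d → ℂˣ)
    (v : Fin n → ℂ) : torusAct M t⁻¹ (torusAct M t v) = v := by
  rw [torusAct_mul, inv_mul_cancel, torusAct_one]

lemma torusOrbit_eq_of_mem {d n : ℕ} (M : Matrix (Fin d) (Fin n) ℤ) {v w : Fin n → ℂ}
    (t : Fin d → ℂˣ) (hw : w = torusAct M t v) :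
    torusOrbit M v = torusOrbit M w := by
  have hv : v = torusAct M t⁻¹ w := by rw [hw, torusAct_inv_cancel]
  ext x
  constructor
  · rintro ⟨s, rfl⟩
    exact ⟨s * t⁻¹, by rw [← torusAct_mul, ← hv]⟩
  · rintro ⟨s, rfl⟩
    exact ⟨s * t, by rw [← torusAct_mul, ← hw]⟩

lemma compactOrbit_eq_of_mem {d n : ℕ} (M : Matrix (Fin d) (Fin n) ℤ) {v w : Fin n → ℂ}
    (t : Fin d → ℂˣ) (ht : ∀ i, ‖(t i : ℂ)‖ = 1) (hw : w = torusAct M t v) :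
    compactOrbit M v = compactOrbit M w := by
  have hv : v = torusAct M t⁻¹ w := by rw [hw, torusAct_inv_cancel]
  ext x
  constructor
  · rintro ⟨s, hs, rfl⟩
    exact ⟨s * t⁻¹, fun i => by simp [norm_mul, map_inv₀, hs i, ht i],
      by rw [← torusAct_mul, ← hv]⟩
  · rintro ⟨s, hs, rfl⟩
    exact ⟨s * t, fun i => by simp [norm_mul, hs i, ht i],
      by rw [← torusAct_mul, ← hw]⟩

/-- `O_{K,v} = O_{K,w}` iff `O_{T,v} = O_{T,w}` and `|v j| = |w j|` for all `j`. -/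
theorem compact_orbit_eq_iff {d n : ℕ} (M : Matrix (Fin d) (Fin n) ℤ) (v w : Fin n → ℂ) :
    compactOrbit M v = compactOrbit M w ↔
      (torusOrbit M v = torusOrbit M w ∧ ∀ j, ‖v j‖ = ‖w j‖) := by
  constructor
  · intro h
    have hv : v ∈ compactOrbit M w := by
      rw [← h]
      exact ⟨1, fun i => by simp, (torusAct_one M v).symm⟩
    obtain ⟨t, ht, hv⟩ := hv
    refine ⟨(torusOrbit_eq_of_mem M t hv).symm, fun j => ?_⟩
    rw [hv]
    simp [torusAct, norm_mul, norm_prod, norm_zpow, ht]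
  · rintro ⟨horb, habs⟩
    have hw : w ∈ torusOrbit M v := by
      rw [horb]
      exact ⟨1, (torusAct_one M w).symm⟩
    obtain ⟨t, hw⟩ := hw
    have habst : ∀ i, (‖(t i : ℂ)‖ : ℂ) ≠ 0 := fun i =>
      Complex.ofReal_ne_zero.mpr (norm_ne_zero_iff.mpr (Units.ne_zero (t i)))
    set u : Fin d → ℂˣ := fun i =>
      Units.mk0 ((t i : ℂ) / (‖(t i : ℂ)‖ : ℂ))
        (div_ne_zero (Units.ne_zero (t i)) (habst i)) with hu_def
    have hu : ∀ i, ‖(u i : ℂ)‖ = 1 := fun i => by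
      simp [hu_def, norm_div, Complex.norm_real,
        abs_of_nonneg (norm_nonneg (t i : ℂ)),
        div_self (norm_ne_zero_iff.mpr (Units.ne_zero (t i)))]
    have hwu : w = torusAct M u v := by
      funext j
      by_cases hvj : v j = 0
      · rw [hw]; simp [torusAct, hvj]
      · have hkey : ‖∏ i, (t i : ℂ) ^ M i j‖ = 1 := by
          have h1 : ‖w j‖ =
              ‖∏ i, (t i : ℂ) ^ M i j‖ * ‖v j‖ := by
            rw [hw]; simp [torusAct, norm_mul]
          have h2 := habs j
          rw [h1] at h2
          have hvnz : ‖v j‖ ≠ 0 := norm_ne_zero_iff.mpr hvj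
          have h3 : ‖∏ i, (t i : ℂ) ^ M i j‖ * ‖v j‖
              = 1 * ‖v j‖ := by rw [one_mul]; exact h2.symm
          exact mul_right_cancel₀ hvnz h3
        have hρ : (∏ i, ((‖(t i : ℂ)‖ : ℝ) : ℂ) ^ M i j) = 1 := by
          have hreal : ∏ i, ‖(t i : ℂ)‖ ^ M i j = 1 := by
            rw [← hkey]; simp [norm_prod, norm_zpow]
          calc (∏ i, ((‖(t i : ℂ)‖ : ℝ) : ℂ) ^ M i j)
              = ((∏ i, ‖(t i : ℂ)‖ ^ M i j : ℝ) : ℂ) := by push_cast; ring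
            _ = 1 := by rw [hreal]; norm_num
        have : (∏ i, (u i : ℂ) ^ M i j) = ∏ i, (t i : ℂ) ^ M i j := by
          calc (∏ i, (u i : ℂ) ^ M i j)
              = ∏ i, ((t i : ℂ) ^ M i j / ((‖(t i : ℂ)‖ : ℝ) : ℂ) ^ M i j) := by
                simp [hu_def, div_zpow]
            _ = (∏ i, (t i : ℂ) ^ M i j) / (∏ i, ((‖(t i : ℂ)‖ : ℝ) : ℂ) ^ M i j) :=
                Finset.prod_div_distrib ..
            _ = ∏ i, (t i : ℂ) ^ M i j := by rw [hρ, div_one]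
        rw [hw]
        simp only [torusAct, this]
    exact compactOrbit_eq_of_mem M u hu hwu
end
end

section
/- If a Laurent monomial f = x^e (with e ∈ ℤ^S, possibly negative exponents, supported on S = esupp(v) = esupp(w)) is T-invariant and separates v and w, and moreover for each k ∈ S with e_k < 0 one fixes an invariant monomial m_k = x^{c^{(k)}} with nonnegative exponents and c^{(k)}_k > 0 satisfying m_k(v) = m_k(w), then f̃ := f · ∏_{k: e_k<0} m_k^{−e_k} is an invariant monomial with all exponents nonnegative that also separates v and w. -/
open scoped BigOperators

noncomputable section

private lemma zpow_sum' {ι : Type*} (x : ℂ) (hx : x ≠ 0) (s : Finset ι) (t : ι → ℤ) :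
    x ^ (∑ k ∈ s, t k) = ∏ k ∈ s, x ^ t k := by
  classical
  induction s using Finset.cons_induction with
  | empty => simp
  | cons a s ha ih => rw [Finset.sum_cons, Finset.prod_cons, zpow_add₀ hx, ih]

private lemma key_split {n : ℕ} (x : Fin n → ℂ) (e : Fin n → ℤ) (c : Fin n → Fin n → ℕ)
    (hx : ∀ j, x j = 0 → e j = 0 ∧ ∀ k, e k < 0 → c k j = 0) :
    ∏ j, x j ^ (e j + ∑ k, (if e k < 0 then (-(e k)) * (c k j : ℤ) else 0))
      = (∏ j, x j ^ e j) *
        ∏ k, (if e k < 0 then (∏ j, x j ^ c k j) ^ (-(e k)).toNat else 1) := by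
  have step : ∀ j, x j ^ (e j + ∑ k, (if e k < 0 then (-(e k)) * (c k j : ℤ) else 0))
      = x j ^ e j * ∏ k, (if e k < 0 then (x j ^ c k j) ^ (-(e k)).toNat else 1) := by
    intro j
    by_cases hxj : x j = 0
    · obtain ⟨he, hck⟩ := hx j hxj
      have hsum : (∑ k, (if e k < 0 then (-(e k)) * (c k j : ℤ) else 0)) = 0 := by
        apply Finset.sum_eq_zero
        intro k _
        split_ifs with h
        · rw [hck k h]; simp
        · rfl
      rw [he, hsum]
      simp only [add_zero, zpow_zero, one_mul]
      refine (Finset.prod_eq_one ?_).symm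
      intro k _
      split_ifs with h
      · rw [hck k h]; simp
      · rfl
    · rw [zpow_add₀ hxj, zpow_sum' (x j) hxj]
      congr 1
      apply Finset.prod_congr rfl
      intro k _
      split_ifs with h
      · rw [mul_comm, zpow_mul, zpow_natCast,
          ← Int.toNat_of_nonneg (show (0:ℤ) ≤ -(e k) by omega), zpow_natCast,
          Int.toNat_natCast]
      · exact zpow_zero _
  calc ∏ j, x j ^ (e j + ∑ k, (if e k < 0 then (-(e k)) * (c k j : ℤ) else 0))
      = ∏ j, (x j ^ e j * ∏ k, (if e k < 0 then (x j ^ c k j) ^ (-(e k)).toNat else 1)) :=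
        Finset.prod_congr rfl fun j _ => step j
    _ = (∏ j, x j ^ e j) * ∏ j, ∏ k, (if e k < 0 then (x j ^ c k j) ^ (-(e k)).toNat else 1) :=
        Finset.prod_mul_distrib
    _ = (∏ j, x j ^ e j) * ∏ k, (if e k < 0 then (∏ j, x j ^ c k j) ^ (-(e k)).toNat else 1) := by
        rw [Finset.prod_comm]
        congr 1
        apply Finset.prod_congr rfl
        intro k _
        split_ifs with h
        · rw [← Finset.prod_pow]
        · simp

/-- Clearing denominators of a separating invariant Laurent monomial: if `f = x^e` is an
invariant Laurent monomial supported on `S = esupp v = esupp w` separating `v` and `w`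
(where `supp v = supp w`), and for each `k` with `e k < 0` one fixes an invariant monomial
`m_k = x^{c k}` with nonnegative exponents (supported on `supp v`), `c k k > 0`, and
`m_k(v) = m_k(w)`, then `f̃ = f · ∏_{k : e k < 0} m_k ^ (-(e k))` is an invariant monomial
with all exponents nonnegative that still separates `v` and `w`. -/
theorem clearing_denominators_separating_monomial {d n : ℕ}
    (M : Matrix (Fin d) (Fin n) ℤ) (v w : Fin n → ℂ)
    (hsupp : ∀ j, v j ≠ 0 ↔ w j ≠ 0)
    (S : Set (Fin n)) (hSv : S = esupp M v) (hSw : S = esupp M w)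
    (e : Fin n → ℤ) (he0 : ∀ j, j ∉ S → e j = 0)
    (heinv : ∀ i, ∑ j, e j * M i j = 0)
    (hsep : ∏ j, (v j) ^ e j ≠ ∏ j, (w j) ^ e j)
    (c : Fin n → Fin n → ℕ)
    (hc : ∀ k, e k < 0 →
      (∀ j, v j = 0 → c k j = 0) ∧
      (∀ i, ∑ j, (c k j : ℤ) * M i j = 0) ∧
      0 < c k k ∧
      ∏ j, (v j) ^ c k j = ∏ j, (w j) ^ c k j) :
    (∀ j, 0 ≤ e j + ∑ k, (if e k < 0 then (-(e k)) * (c k j : ℤ) else 0)) ∧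
    (∀ i, ∑ j, (e j + ∑ k, (if e k < 0 then (-(e k)) * (c k j : ℤ) else 0)) * M i j = 0) ∧
    ∏ j, (v j) ^ (e j + ∑ k, (if e k < 0 then (-(e k)) * (c k j : ℤ) else 0)) ≠
      ∏ j, (w j) ^ (e j + ∑ k, (if e k < 0 then (-(e k)) * (c k j : ℤ) else 0)) := by
  classical
  -- basic consequences of the hypotheses
  have hvS : ∀ j, v j = 0 → e j = 0 := by
    intro j hvj
    apply he0
    rw [hSv]
    intro hj
    exact hj.1 hvj
  have hvc : ∀ j, v j = 0 → ∀ k, e k < 0 → c k j = 0 := by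
    intro j hvj k hk
    exact (hc k hk).1 j hvj
  have hwzero : ∀ j, w j = 0 → v j = 0 := by
    intro j hwj
    by_contra hvj
    exact ((hsupp j).mp hvj) hwj
  refine ⟨?_, ?_, ?_⟩
  · -- nonnegativity
    intro j
    have hterms : ∀ k ∈ (Finset.univ : Finset (Fin n)),
        (0 : ℤ) ≤ (if e k < 0 then (-(e k)) * (c k j : ℤ) else 0) := by
      intro k _
      split_ifs with h
      · exact mul_nonneg (by omega) (Int.natCast_nonneg _)
      · exact le_refl 0
    by_cases h : e j < 0
    · have hsingle : (if e j < 0 then (-(e j)) * (c j j : ℤ) else 0) ≤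
          ∑ k, (if e k < 0 then (-(e k)) * (c k j : ℤ) else 0) :=
        Finset.single_le_sum hterms (Finset.mem_univ j)
      have hcjj : 0 < c j j := (hc j h).2.2.1
      have : (-(e j)) * (c j j : ℤ) ≥ -(e j) := by
        nlinarith [Int.toNat_of_nonneg (le_of_lt (neg_pos.mpr h)), (by exact_mod_cast hcjj : (1:ℤ) ≤ (c j j : ℤ))]
      rw [if_pos h] at hsingle
      linarith
    · have : (0:ℤ) ≤ ∑ k, (if e k < 0 then (-(e k)) * (c k j : ℤ) else 0) :=
        Finset.sum_nonneg hterms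
      push_neg at h
      linarith
  · -- invariance
    intro i
    simp only [add_mul, Finset.sum_add_distrib, heinv i, zero_add, Finset.sum_mul]
    rw [Finset.sum_comm]
    apply Finset.sum_eq_zero
    intro k _
    split_ifs with h
    · simp only [mul_assoc]
      rw [← Finset.mul_sum, (hc k h).2.1 i, mul_zero]
    · simp
  · -- separation
    have hwS : ∀ j, w j = 0 → e j = 0 := fun j hwj => hvS j (hwzero j hwj)
    have hwc : ∀ j, w j = 0 → ∀ k, e k < 0 → c k j = 0 :=
      fun j hwj k hk => hvc j (hwzero j hwj) k hk
    rw [key_split v e c (fun j hj => ⟨hvS j hj, hvc j hj⟩),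
        key_split w e c (fun j hj => ⟨hwS j hj, hwc j hj⟩)]
    have hQeq : (∏ k, (if e k < 0 then (∏ j, v j ^ c k j) ^ (-(e k)).toNat else 1))
        = ∏ k, (if e k < 0 then (∏ j, w j ^ c k j) ^ (-(e k)).toNat else 1) := by
      apply Finset.prod_congr rfl
      intro k _
      split_ifs with h
      · rw [(hc k h).2.2.2]
      · rfl
    have hQne : (∏ k, (if e k < 0 then (∏ j, w j ^ c k j) ^ (-(e k)).toNat else 1)) ≠ 0 := by
      apply Finset.prod_ne_zero_iff.mpr
      intro k _
      split_ifs with h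
      · apply pow_ne_zero
        apply Finset.prod_ne_zero_iff.mpr
        intro j _
        by_cases hwj : w j = 0
        · rw [hwc j hwj k h, hwj]; simp
        · exact pow_ne_zero _ hwj
      · exact one_ne_zero
    rw [hQeq]
    intro hcontra
    exact hsep (mul_right_cancel₀ hQne hcontra)
end
end
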